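/- For each fixed real x > 0, the function y ↦ x·y/((1+x)^y - 1) is convex on y ∈ (0, ∞). -/

import Mathlib

open Real Set

private lemma hasDerivAt_F (z : ℝ) :
    HasDerivAt (fun z : ℝ => z * (Real.exp z + 1) - 2 * (Real.exp z - 1))
      ((z - 1) * Real.exp z + 1) z := by
  have h1 : HasDerivAt (fun z : ℝ => z * (Real.exp z + 1))
      (1 * (Real.exp z + 1) + z * Real.exp z) z :=
    (hasDerivAt_id z).mul ((Real.hasDerivAt_exp z).add_const 1)
  have h2 : HasDerivAt (fun z : ℝ => 2 * (Real.exp z - 1)) (2 * Real.exp z) z :=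
    ((Real.hasDerivAt_exp z).sub_const 1).const_mul 2
  have := h1.sub h2
  exact this.congr_deriv (by ring)

private lemma key_ineq : ∀ z : ℝ, 0 ≤ z → 2 * (Real.exp z - 1) ≤ z * (Real.exp z + 1) := by
  intro z hz
  set F : ℝ → ℝ := fun z => z * (Real.exp z + 1) - 2 * (Real.exp z - 1) with hF
  have hmono : MonotoneOn F (Ici (0 : ℝ)) := by
    apply monotoneOn_of_deriv_nonneg (convex_Ici 0)
    · exact (Continuous.continuousOn (by continuity))
    · intro t ht
      exact (hasDerivAt_F t).differentiableAt.differentiableWithinAt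
    · intro t ht
      rw [(hasDerivAt_F t).deriv]
      -- (t-1) * exp t + 1 ≥ 0 since 1 - t ≤ exp (-t)
      have h := Real.add_one_le_exp (-t)
      have hpos := Real.exp_pos t
      have : (1 - t) * Real.exp t ≤ Real.exp (-t) * Real.exp t := by
        apply mul_le_mul_of_nonneg_right _ hpos.le
        linarith
      rw [← Real.exp_add, neg_add_cancel, Real.exp_zero] at this
      nlinarith
  have h0 : F 0 = 0 := by simp [hF]
  have := hmono (self_mem_Ici) (mem_Ici.mpr hz) hz
  rw [h0] at this
  simp only [hF] at this
  linarith

private lemma exp_sub_one_pos {z : ℝ} (hz : 0 < z) : 0 < Real.exp z - 1 := by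
  have : (1 : ℝ) < Real.exp z := by
    calc (1 : ℝ) = Real.exp 0 := by simp
    _ < Real.exp z := Real.exp_lt_exp.mpr hz
  linarith

private noncomputable def g : ℝ → ℝ := fun z => z / (Real.exp z - 1)

private noncomputable def g1 : ℝ → ℝ := fun z =>
  (1 * (Real.exp z - 1) - z * Real.exp z) / (Real.exp z - 1) ^ 2

private lemma hasDerivAt_g {z : ℝ} (hz : 0 < z) : HasDerivAt g (g1 z) z :=
  (hasDerivAt_id z).div ((Real.hasDerivAt_exp z).sub_const 1) (exp_sub_one_pos hz).ne'

private lemma hasDerivAt_g1 {z : ℝ} (hz : 0 < z) :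
    HasDerivAt g1
      (((Real.exp z - (Real.exp z + z * Real.exp z)) * (Real.exp z - 1) ^ 2 -
        (1 * (Real.exp z - 1) - z * Real.exp z) *
          (2 * (Real.exp z - 1) ^ 1 * Real.exp z)) / ((Real.exp z - 1) ^ 2) ^ 2) z := by
  have hne : (Real.exp z - 1) ^ 2 ≠ 0 := pow_ne_zero _ (exp_sub_one_pos hz).ne'
  have hnum : HasDerivAt (fun z : ℝ => 1 * (Real.exp z - 1) - z * Real.exp z)
      (Real.exp z - (Real.exp z + z * Real.exp z)) z := by
    have h1 : HasDerivAt (fun z : ℝ => 1 * (Real.exp z - 1)) (Real.exp z) z := by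
      simpa using (((Real.hasDerivAt_exp z).sub_const 1).const_mul 1)
    have h2 : HasDerivAt (fun z : ℝ => z * Real.exp z)
        (1 * Real.exp z + z * Real.exp z) z :=
      (hasDerivAt_id z).mul (Real.hasDerivAt_exp z)
    exact (h1.sub h2).congr_deriv (by ring)
  have hden : HasDerivAt (fun z : ℝ => (Real.exp z - 1) ^ 2)
      (2 * (Real.exp z - 1) ^ 1 * Real.exp z) z := by
    exact ((Real.hasDerivAt_exp z).sub_const 1).pow 2
  exact hnum.div hden hne

private lemma g_convex : ConvexOn ℝ (Ioi (0 : ℝ)) g := by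
  have hint : interior (Ioi (0 : ℝ)) = Ioi 0 := interior_Ioi
  have hderiv_eq : ∀ z ∈ Ioi (0 : ℝ), deriv g z = g1 z := fun z hz =>
    (hasDerivAt_g hz).deriv
  apply convexOn_of_deriv2_nonneg (convex_Ioi 0)
  · intro z hz
    exact ((hasDerivAt_g hz).continuousAt).continuousWithinAt
  · rw [hint]
    intro z hz
    exact (hasDerivAt_g hz).differentiableAt.differentiableWithinAt
  · rw [hint]
    intro z hz
    have hdiff1 : DifferentiableOn ℝ g1 (Ioi 0) := fun t ht =>
      (hasDerivAt_g1 ht).differentiableAt.differentiableWithinAt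
    exact (hdiff1.congr hderiv_eq) z hz
  · rw [hint]
    intro z hz
    have heq : deriv g =ᶠ[nhds z] g1 :=
      Filter.eventuallyEq_of_mem (isOpen_Ioi.mem_nhds hz) hderiv_eq
    have : deriv^[2] g z = deriv g1 z := by
      simp only [Function.iterate_succ, Function.iterate_zero, Function.comp_apply, id_eq]
      exact heq.deriv_eq
    rw [this, (hasDerivAt_g1 hz).deriv]
    set u := Real.exp z with hu
    have hepos : (0 : ℝ) < u := Real.exp_pos z
    have hupos : (0 : ℝ) < u - 1 := exp_sub_one_pos hz
    have hkey := key_ineq z hz.le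
    rw [← hu] at hkey
    apply div_nonneg _ (by positivity)
    have hfactor : (u - (u + z * u)) * (u - 1) ^ 2 -
        (1 * (u - 1) - z * u) * (2 * (u - 1) ^ 1 * u) =
        (u - 1) * u * (z * (u + 1) - 2 * (u - 1)) := by ring
    rw [hfactor]
    have : 0 ≤ z * (u + 1) - 2 * (u - 1) := by linarith
    positivity

theorem h_convex_in_y (x : ℝ) (hx : 0 < x) :
    ConvexOn ℝ (Set.Ioi (0 : ℝ)) (fun y : ℝ => x * y / ((1 + x) ^ y - 1)) := by
  set c : ℝ := Real.log (1 + x) with hc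
  have h1x : (1 : ℝ) < 1 + x := by linarith
  have hcpos : 0 < c := Real.log_pos h1x
  -- convexity of y ↦ g (c * y) on Ioi 0
  have hg2 : ConvexOn ℝ (Ioi (0 : ℝ)) (fun y => g (c * y)) := by
    refine ⟨convex_Ioi 0, fun a ha b hb s t hs ht hst => ?_⟩
    have ha' : c * a ∈ Ioi (0 : ℝ) := mul_pos hcpos ha
    have hb' : c * b ∈ Ioi (0 : ℝ) := mul_pos hcpos hb
    have := g_convex.2 ha' hb' hs ht hst
    simp only [smul_eq_mul] at this ⊢
    rw [show c * (s * a + t * b) = s * (c * a) + t * (c * b) by ring]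
    exact this
  have hsmul : ConvexOn ℝ (Ioi (0 : ℝ)) (fun y => (x / c) • g (c * y)) :=
    hg2.smul (div_pos hx hcpos).le
  apply hsmul.congr
  intro y hy
  have hy' : (0 : ℝ) < y := hy
  have hrpow : (1 + x) ^ y = Real.exp (c * y) := by
    rw [Real.rpow_def_of_pos (by linarith : (0:ℝ) < 1 + x), mul_comm]
  have hne : Real.exp (c * y) - 1 ≠ 0 := (exp_sub_one_pos (mul_pos hcpos hy')).ne'
  simp only [smul_eq_mul, g, hrpow]
  rw [div_mul_div_comm, show x * (c * y) = c * (x * y) by ring,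
    mul_div_mul_left _ _ hcpos.ne']
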